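/- Let N ≥ 2 be an integer and let A be the (N−1)×(N−1) matrix with A_{i,j} = 1/2 if |i−j| = 1 and 0 otherwise. Then for every integer k ≥ 0, the (1, N−1) entry of A^k equals (2/N)·∑_{ℓ=1}^{N−1} (−1)^{ℓ+1} · cos^k(ℓπ/N) · sin²(ℓπ/N). -/

import Mathlib

open Real Finset

/-- The `(N−1)×(N−1)` matrix (rows and columns indexed by `{1,…,N−1}`, realized as
`Fin (N-1)` via `m ↦ m+1`) with entries `1/2` if `|i−j| = 1` and `0` otherwise. -/
noncomputable def tridiagA (N : ℕ) : Matrix (Fin (N - 1)) (Fin (N - 1)) ℝ :=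
  fun i j => if (i : ℕ) + 1 = (j : ℕ) ∨ (j : ℕ) + 1 = (i : ℕ) then 1 / 2 else 0

lemma aux_cos_sum (N : ℕ) (hN : 2 ≤ N) (m : ℕ) (hm : m < N) :
    ∑ ℓ ∈ Finset.Icc 1 (N-1), (-1:ℝ)^ℓ * Real.cos ((m:ℝ) * (ℓ*π/N)) =
      if (m + N) % 2 = 0 then -1 else 0 := by
  have hN0 : (N:ℝ) ≠ 0 := by positivity
  set φ : ℝ := (m + N) * π / N with hφ
  set z : ℂ := Complex.exp (φ * Complex.I) with hz
  have hzre : z.re = Real.cos φ := Complex.exp_ofReal_mul_I_re φ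
  have hzim : z.im = Real.sin φ := Complex.exp_ofReal_mul_I_im φ
  -- real part of z^ℓ
  have hre : ∀ ℓ : ℕ, ((z ^ ℓ : ℂ)).re = (-1:ℝ)^ℓ * Real.cos ((m:ℝ) * (ℓ*π/N)) := by
    intro ℓ
    rw [hz, ← Complex.exp_nat_mul]
    have h1 : ((ℓ:ℂ) * (↑φ * Complex.I)) = ((ℓ * φ : ℝ) : ℂ) * Complex.I := by push_cast; ring
    rw [h1, Complex.exp_ofReal_mul_I_re]
    have h2 : (ℓ:ℝ) * φ = (m:ℝ) * (ℓ*π/N) + ℓ * π := by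
      rw [hφ]; field_simp
    have hc : Real.cos (ℓ * π) = (-1:ℝ)^ℓ := by
      have := Real.cos_nat_mul_pi_sub 0 ℓ; simpa using this
    rw [h2, Real.cos_add, hc, Real.sin_nat_mul_pi]
    ring
  -- z ≠ 1
  have hz1 : z ≠ 1 := by
    intro h
    rw [hz, Complex.exp_eq_one_iff] at h
    obtain ⟨n, hn⟩ := h
    have hφc : (φ : ℂ) = (n : ℂ) * (2 * π) := by
      have := mul_right_cancel₀ Complex.I_ne_zero (by rw [hn]; ring : (φ:ℂ) * Complex.I = ((n:ℂ) * (2*π)) * Complex.I)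
      exact this
    have hreal : φ = (n : ℝ) * (2 * π) := by exact_mod_cast hφc
    rw [hφ] at hreal
    have hπ := Real.pi_ne_zero
    have hr2 : ((m:ℝ) + N) = (n:ℝ) * (2 * N) := by
      field_simp at hreal
      apply mul_right_cancel₀ hπ
      linear_combination π * hreal
    have hint : (m : ℤ) + N = n * (2 * N) := by exact_mod_cast hr2
    have hmn : (m:ℤ) < N := by exact_mod_cast hm
    have hN2 : (2:ℤ) ≤ N := by exact_mod_cast hN
    rcases le_or_gt n 0 with h | h
    · nlinarith
    · nlinarith
  -- z ^ N
  have hzN : z ^ N = (-1 : ℂ) ^ (m + N) := by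
    rw [hz, ← Complex.exp_nat_mul]
    have hNc : (N:ℂ) ≠ 0 := by exact_mod_cast (Nat.cast_ne_zero.mpr (by omega) : (N:ℝ) ≠ 0)
    have : (N:ℂ) * (↑φ * Complex.I) = ((m + N : ℕ) : ℂ) * (π * Complex.I) := by
      rw [hφ]; push_cast; field_simp
    rw [this, Complex.exp_nat_mul, Complex.exp_pi_mul_I]
  -- sum over Icc in terms of geometric sum
  have hIcc : Finset.Icc 1 (N-1) = Finset.Ico 1 N := by
    rw [← Finset.Ico_add_one_right_eq_Icc]; congr 1; omega
  have hsum : (∑ ℓ ∈ Finset.Icc 1 (N-1), z^ℓ) = (z ^ N - 1)/(z - 1) - 1 := by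
    rw [← geom_sum_eq hz1 N, hIcc]
    have h1 : ∑ ℓ ∈ Finset.Ico 1 N, z^ℓ = ∑ i ∈ Finset.range (N-1), z^(1+i) :=
      Finset.sum_Ico_eq_sum_range (fun k => z ^ k) 1 N
    have h2 : ∑ i ∈ Finset.range N, z^i = ∑ i ∈ Finset.range (N-1), z^(i+1) + z^0 := by
      rw [show N = (N-1)+1 by omega, Finset.sum_range_succ']
      simp
    rw [h1, h2, pow_zero]
    rw [show (∑ i ∈ Finset.range (N-1), z^(1+i)) = ∑ i ∈ Finset.range (N-1), z^(i+1) from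
      Finset.sum_congr rfl (fun i _ => by rw [add_comm])]
    ring
  have hgoal : ∑ ℓ ∈ Finset.Icc 1 (N-1), (-1:ℝ)^ℓ * Real.cos ((m:ℝ) * (ℓ*π/N)) =
      ((∑ ℓ ∈ Finset.Icc 1 (N-1), z^ℓ)).re := by
    rw [Complex.re_sum]
    exact Finset.sum_congr rfl (fun ℓ _ => (hre ℓ).symm)
  rw [hgoal, hsum, hzN]
  have hnormSq : Complex.normSq (z-1) = 2 - 2*Real.cos φ := by
    rw [Complex.normSq_apply, Complex.sub_re, Complex.sub_im, hzre, hzim]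
    simp only [Complex.one_re, Complex.one_im, sub_zero]
    nlinarith [Real.sin_sq_add_cos_sq φ]
  have hcos : Real.cos φ ≠ 1 := by
    intro h
    apply hz1
    have hs : Real.sin φ = 0 := by nlinarith [Real.sin_sq_add_cos_sq φ]
    apply Complex.ext <;> simp [hzre, hzim, h, hs]
  rcases Nat.even_or_odd (m+N) with he | ho
  · rw [if_pos (Nat.even_iff.mp he), Even.neg_one_pow he]
    simp
  · rw [if_neg (by rw [Nat.odd_iff.mp ho]; norm_num), Odd.neg_one_pow ho]
    have h2 : ((-1 : ℂ) - 1) = -2 := by ring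
    rw [h2, Complex.sub_re, Complex.div_re, hnormSq]
    simp only [Complex.sub_re, Complex.sub_im, hzre, hzim, Complex.one_re, Complex.one_im,
      sub_zero, Complex.one_re]
    have hd : (2:ℝ) - 2*Real.cos φ ≠ 0 := by
      intro h; apply hcos; linarith
    have hre2 : (-2 : ℂ).re = -2 := by norm_num
    have him2 : (-2 : ℂ).im = 0 := by norm_num
    rw [hre2, him2]
    field_simp
    ring

lemma cos_nat_pi (ℓ : ℕ) : Real.cos (ℓ * π) = (-1:ℝ)^ℓ := by
  have := Real.cos_nat_mul_pi_sub 0 ℓ; simpa using this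

lemma aux_cos_sum_N (N : ℕ) (hN : 2 ≤ N) :
    ∑ ℓ ∈ Finset.Icc 1 (N-1), (-1:ℝ)^ℓ * Real.cos ((N:ℝ) * (ℓ*π/N)) = N - 1 := by
  have hN0 : (N:ℝ) ≠ 0 := by positivity
  have key : ∀ ℓ ∈ Finset.Icc 1 (N-1), (-1:ℝ)^ℓ * Real.cos ((N:ℝ) * (ℓ*π/N)) = 1 := by
    intro ℓ _
    have h : (N:ℝ) * ((ℓ:ℝ)*π/N) = ℓ*π := by field_simp
    rw [h, cos_nat_pi]
    rw [← pow_add]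
    simp [pow_mul]
  rw [Finset.sum_congr rfl key, Finset.sum_const, Nat.card_Icc]
  have : N - 1 + 1 - 1 = N - 1 := by omega
  rw [this, nsmul_eq_mul, mul_one]
  push_cast [Nat.cast_sub (by omega : 1 ≤ N)]
  ring

noncomputable def G (N k a : ℕ) : ℝ :=
  2/(N:ℝ) * ∑ ℓ ∈ Finset.Icc 1 (N-1),
    (-1:ℝ)^(ℓ+1) * Real.cos ((ℓ:ℝ)*π/N)^k * (Real.sin ((a:ℝ) * ((ℓ:ℝ)*π/N)) * Real.sin ((ℓ:ℝ)*π/N))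

lemma G_zero (N k : ℕ) : G N k 0 = 0 := by simp [G]

lemma G_top (N k : ℕ) (hN : 2 ≤ N) : G N k N = 0 := by
  have hN0 : (N:ℝ) ≠ 0 := by positivity
  unfold G
  rw [Finset.sum_eq_zero, mul_zero]
  intro ℓ _
  have h : (N:ℝ) * ((ℓ:ℝ)*π/N) = ℓ*π := by field_simp
  rw [h, Real.sin_nat_mul_pi]
  ring

lemma G_rec (N k a : ℕ) (ha : 1 ≤ a) :
    G N (k+1) a = (G N k (a-1) + G N k (a+1))/2 := by
  unfold G
  have key : ∀ ℓ ∈ Finset.Icc 1 (N-1),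
      (-1:ℝ)^(ℓ+1) * Real.cos ((ℓ:ℝ)*π/N)^(k+1) * (Real.sin ((a:ℝ) * ((ℓ:ℝ)*π/N)) * Real.sin ((ℓ:ℝ)*π/N)) =
      ((-1:ℝ)^(ℓ+1) * Real.cos ((ℓ:ℝ)*π/N)^k * (Real.sin (((a-1:ℕ):ℝ) * ((ℓ:ℝ)*π/N)) * Real.sin ((ℓ:ℝ)*π/N))
       + (-1:ℝ)^(ℓ+1) * Real.cos ((ℓ:ℝ)*π/N)^k * (Real.sin (((a+1:ℕ):ℝ) * ((ℓ:ℝ)*π/N)) * Real.sin ((ℓ:ℝ)*π/N)))/2 := by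
    intro ℓ _
    set θ : ℝ := (ℓ:ℝ)*π/N with hθ
    have h1 : ((a-1:ℕ):ℝ) * θ = (a:ℝ)*θ - θ := by
      rw [Nat.cast_sub ha]; push_cast; ring
    have h2 : ((a+1:ℕ):ℝ) * θ = (a:ℝ)*θ + θ := by push_cast; ring
    rw [h1, h2, Real.sin_sub, Real.sin_add, pow_succ]
    ring
  rw [Finset.sum_congr rfl key, ← Finset.sum_div, Finset.sum_add_distrib]
  ring

lemma G_base (N : ℕ) (hN : 2 ≤ N) (i : ℕ) (hi : i < N - 1) :
    G N 0 (i+1) = if i = N-2 then 1 else 0 := by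
  have hN0 : (N:ℝ) ≠ 0 := by positivity
  unfold G
  have key : ∀ ℓ ∈ Finset.Icc 1 (N-1),
      (-1:ℝ)^(ℓ+1) * Real.cos ((ℓ:ℝ)*π/N)^0 * (Real.sin (((i+1:ℕ):ℝ) * ((ℓ:ℝ)*π/N)) * Real.sin ((ℓ:ℝ)*π/N)) =
      ((-1:ℝ)^ℓ * Real.cos (((i+2:ℕ):ℝ) * ((ℓ:ℝ)*π/N)) - (-1:ℝ)^ℓ * Real.cos (((i:ℕ):ℝ) * ((ℓ:ℝ)*π/N)))/2 := by
    intro ℓ _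
    set θ : ℝ := (ℓ:ℝ)*π/N with hθ
    have h1 : ((i:ℕ):ℝ) * θ = ((i+1:ℕ):ℝ)*θ - θ := by push_cast; ring
    have h2 : ((i+2:ℕ):ℝ) * θ = ((i+1:ℕ):ℝ)*θ + θ := by push_cast; ring
    rw [h1, h2, Real.cos_sub, Real.cos_add, pow_zero, pow_succ]
    ring
  rw [Finset.sum_congr rfl key, ← Finset.sum_div, Finset.sum_sub_distrib]
  by_cases h : i = N - 2
  · subst h
    rw [if_pos rfl]
    rw [show N-2+2 = N by omega]
    rw [aux_cos_sum_N N hN, aux_cos_sum N hN (N-2) (by omega),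
        if_pos (by omega : (N-2+N) % 2 = 0)]
    field_simp
    ring
  · rw [if_neg h]
    rw [aux_cos_sum N hN (i+2) (by omega), aux_cos_sum N hN i (by omega),
        show (i+2+N) % 2 = (i+N) % 2 by omega]
    ring

lemma sum_helper (n : ℕ) (F : ℕ → ℝ) (hF0 : F 0 = 0) (hFn : F (n + 1) = 0)
    (i : ℕ) (hi : i < n) :
    ∑ m ∈ Finset.range n, (if i + 1 = m ∨ m + 1 = i then (1/2:ℝ) else 0) * F (m+1)
      = (F i + F (i + 2)) / 2 := by
  have split : ∀ m ∈ Finset.range n,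
      (if i + 1 = m ∨ m + 1 = i then (1/2:ℝ) else 0) * F (m+1)
      = (if i + 1 = m then (1/2:ℝ) * F (m+1) else 0)
        + (if m = i - 1 ∧ 1 ≤ i then (1/2:ℝ) * F (m+1) else 0) := by
    intro m _
    by_cases h1 : i + 1 = m <;> by_cases h2 : m + 1 = i <;>
      simp [h1, h2] <;> first | omega | (intro h; omega) | (rw [if_neg (by omega)]) | (rw [if_pos (by omega)])
  rw [Finset.sum_congr rfl split, Finset.sum_add_distrib]
  have s1 : ∑ m ∈ Finset.range n, (if i + 1 = m then (1/2:ℝ) * F (m+1) else 0)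
      = (1/2:ℝ) * F (i+2) := by
    rw [Finset.sum_ite_eq (Finset.range n) (i+1) (fun m => (1/2:ℝ) * F (m+1))]
    rcases lt_or_eq_of_le (by omega : i + 1 ≤ n) with h | h
    · rw [if_pos (Finset.mem_range.mpr h)]
    · rw [if_neg (by simp [← h])]
      rw [show i + 2 = n + 1 by omega, hFn, mul_zero]
  have s2 : ∑ m ∈ Finset.range n, (if m = i - 1 ∧ 1 ≤ i then (1/2:ℝ) * F (m+1) else 0)
      = (1/2:ℝ) * F i := by
    rcases Nat.eq_zero_or_pos i with h | h
    · subst h; simp [hF0]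
    · have : ∀ m ∈ Finset.range n, (if m = i - 1 ∧ 1 ≤ i then (1/2:ℝ) * F (m+1) else 0)
          = (if m = i - 1 then (1/2:ℝ) * F (m+1) else 0) := by
        intro m _
        by_cases hm : m = i - 1
        · simp [hm, (by omega : 1 ≤ i)]
        · simp [hm]
      rw [Finset.sum_congr rfl this,
        Finset.sum_ite_eq' (Finset.range n) (i-1) (fun m => (1/2:ℝ) * F (m+1)),
        if_pos (Finset.mem_range.mpr (by omega)), show i - 1 + 1 = i by omega]
  rw [s1, s2]; ring

lemma main_claim (N : ℕ) (hN : 2 ≤ N) (k : ℕ) :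
    ∀ i : Fin (N-1), (tridiagA N ^ k) i ⟨N-2, Nat.sub_lt_sub_left (by omega) (by omega)⟩ = G N k ((i:ℕ)+1) := by
  induction k with
  | zero =>
    intro i
    rw [pow_zero, Matrix.one_apply, G_base N hN i i.2]
    by_cases h : (i:ℕ) = N - 2
    · rw [if_pos h, if_pos (by exact Fin.ext h)]
    · rw [if_neg h, if_neg (by intro hh; exact h (by rw [hh]))]
  | succ k ih =>
    intro i
    rw [pow_succ', Matrix.mul_apply]
    have step : ∀ m : Fin (N-1), tridiagA N i m * (tridiagA N ^ k) m ⟨N-2, by omega⟩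
        = (fun m : ℕ => (if (i:ℕ) + 1 = m ∨ m + 1 = (i:ℕ) then (1/2:ℝ) else 0) * G N k (m+1)) (m:ℕ) := by
      intro m; rw [ih m]; rfl
    rw [Finset.sum_congr rfl (fun m _ => step m),
      Fin.sum_univ_eq_sum_range (fun m : ℕ => (if (i:ℕ) + 1 = m ∨ m + 1 = (i:ℕ) then (1/2:ℝ) else 0) * G N k (m+1)) (N-1)]
    rw [sum_helper (N-1) (G N k) (G_zero N k) (by rw [show N-1+1 = N by omega]; exact G_top N k hN) (i:ℕ) i.2]
    rw [G_rec N k ((i:ℕ)+1) (by omega), show (i:ℕ)+1-1 = (i:ℕ) by omega]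

/-- For `N ≥ 2` and every integer `k ≥ 0`, the `(1, N−1)` entry of `A^k`
equals `(2/N)·∑_{ℓ=1}^{N−1} (−1)^{ℓ+1} cos^k(ℓπ/N) sin²(ℓπ/N)`. -/
theorem stmt5 (N : ℕ) (hN : 2 ≤ N) (k : ℕ) :
    (tridiagA N ^ k) ⟨0, by omega⟩ ⟨N - 2, by omega⟩ =
      2 / (N : ℝ) * ∑ ℓ ∈ Finset.Icc 1 (N - 1),
        (-1 : ℝ) ^ (ℓ + 1) * Real.cos (ℓ * Real.pi / N) ^ k *
          Real.sin (ℓ * Real.pi / N) ^ 2 := by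
  rw [main_claim N hN k ⟨0, by omega⟩]
  unfold G
  congr 1
  apply Finset.sum_congr rfl
  intro ℓ _
  push_cast
  rw [one_mul]
  ring
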